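/- For every d ≥ 0 and every noetherian commutative ring k, the category of OI(d)-modules over k is locally noetherian: every submodule of a finitely generated OI(d)-module is finitely generated. -/

import Mathlib

open CategoryTheory

universe u

/-- The (skeletal model of the) category `OI` of finite totally ordered sets and
order-preserving injections: the object `n` represents `[n] = {1, …, n}`, and a
morphism `n ⟶ m` is an order-preserving injection `Fin n ↪o Fin m`. -/
def OI : Type := ℕ

namespace OI

/-- Build an object of `OI` from a natural number. -/
def mk (n : ℕ) : OI := n

/-- The underlying natural number of an object of `OI`. -/
def len (n : OI) : ℕ := n

instance : Category OI where
  Hom n m := Fin n.len ↪o Fin m.len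
  id _ := RelEmbedding.refl _
  comp f g := f.trans g
  id_comp _ := rfl
  comp_id _ := rfl
  assoc _ _ _ := rfl

/-- The order embedding underlying a morphism of `OI`. -/
def emb {n m : OI} (f : n ⟶ m) : Fin n.len ↪o Fin m.len := f

@[ext]
theorem hom_ext {n m : OI} (f g : n ⟶ m) (h : ∀ i, emb f i = emb g i) : f = g :=
  RelEmbedding.ext h

end OI

/-- A module over a category `C` (a functor `C ⥤ Mod_k`) is finitely generated if there
are finitely many elements `mᵢ ∈ M xᵢ` whose images under all morphisms span every `M y`;
equivalently, `M` is a quotient of a finite direct sum of principal projectives. -/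
def CatModule.FG {C : Type*} [Category C] {k : Type u} [CommRing k]
    (M : C ⥤ ModuleCat.{u} k) : Prop :=
  ∃ (r : ℕ) (x : Fin r → C) (m : ∀ i, M.obj (x i)),
    ∀ y : C, Submodule.span k
      {v : M.obj y | ∃ (i : Fin r) (f : x i ⟶ y), M.map f (m i) = v} = ⊤

/-- The category `OI(d)`: objects are pairs `(S, λ)` of a finite totally ordered set
(modelled skeletally by `Fin n`) with an increasing `d`-tuple `λ` in it; morphisms are
order-preserving injections carrying the marked tuple of the source to that of the
target. -/
structure OId (d : ℕ) : Type where
  len : ℕ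
  lam : Fin d ↪o Fin len

namespace OId

variable {d : ℕ}

instance : Category (OId d) where
  Hom X Y := { f : Fin X.len ↪o Fin Y.len // ∀ i, f (X.lam i) = Y.lam i }
  id X := ⟨RelEmbedding.refl _, fun _ => rfl⟩
  comp f g := ⟨f.1.trans g.1, fun i => by
    simp only [RelEmbedding.trans_apply, f.2, g.2]⟩
  id_comp _ := rfl
  comp_id _ := rfl
  assoc _ _ _ := rfl

/-- The order embedding underlying a morphism of `OI(d)`. -/
def emb {X Y : OId d} (f : X ⟶ Y) : Fin X.len ↪o Fin Y.len :=
  (f : { f : Fin X.len ↪o Fin Y.len // ∀ i, f (X.lam i) = Y.lam i }).1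

@[ext]
theorem hom_ext {X Y : OId d} (f g : X ⟶ Y) (h : ∀ i, emb f i = emb g i) : f = g :=
  Subtype.ext (RelEmbedding.ext h)

/-- The forgetful functor `Φ : OI(d) ⥤ OI`, `(S, λ) ↦ S`. -/
def forget (d : ℕ) : OId d ⥤ OI where
  obj X := OI.mk X.len
  map f := OId.emb f
  map_id _ := rfl
  map_comp _ _ := rfl

end OId


open CategoryTheory

/-- A strictly monotone self-map of `Fin n` is the identity. -/
theorem strictMono_fin_id {n : ℕ} (ψ : Fin n → Fin n) (h : StrictMono ψ) : ∀ i, ψ i = i := by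
  have key : ∀ (ψ : Fin n → Fin n), StrictMono ψ → ∀ (v : ℕ) (i : Fin n), i.val = v →
      v ≤ (ψ i).val := by
    intro ψ h v
    induction v with
    | zero => intro i _; exact Nat.zero_le _
    | succ v ih =>
      intro i hi
      have hv : v < n := lt_trans (by omega) i.isLt
      have hlt : (⟨v, hv⟩ : Fin n) < i := by simp [Fin.lt_def, hi]
      have h1 := h hlt
      have h2 := ih ⟨v, hv⟩ rfl
      rw [Fin.lt_def] at h1
      omega
  intro i
  have h1 : i.val ≤ (ψ i).val := key ψ h i.val i rfl
  -- conjugate by rev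
  have hrev : StrictMono (fun (j : Fin n) => (ψ j.rev).rev) := by
    intro a b hab
    exact Fin.rev_lt_rev.2 (h (Fin.rev_lt_rev.2 hab))
  have h2 := key _ hrev (i.rev.val) i.rev rfl
  simp only [Fin.rev_rev] at h2
  have h3 : (ψ i).val ≤ i.val := by
    have hr : i.rev.val = n - 1 - i.val := by
      simp [Fin.rev]; omega
    have hr2 : (ψ i).rev.val = n - 1 - (ψ i).val := by
      simp [Fin.rev]; omega
    have := (ψ i).isLt
    have := i.isLt
    omega
  exact Fin.ext (le_antisymm h3 h1)

/-- Two strictly monotone maps from `Fin n` with the same range are equal. -/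
theorem strictMono_range_eq {n : ℕ} {δ : Type*} [LinearOrder δ] (u v : Fin n → δ)
    (hu : StrictMono u) (hv : StrictMono v) (hr : Set.range u = Set.range v) :
    ∀ i, u i = v i := by
  have hmem : ∀ i, u i ∈ Set.range v := fun i => hr ▸ Set.mem_range_self i
  classical
  let ψ : Fin n → Fin n := fun i => (hmem i).choose
  have hψ : ∀ i, v (ψ i) = u i := fun i => (hmem i).choose_spec
  have hψm : StrictMono ψ := by
    intro a b hab
    have : v (ψ a) < v (ψ b) := by rw [hψ a, hψ b]; exact hu hab
    exact hv.lt_iff_lt.1 this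
  intro i
  rw [← hψ i, strictMono_fin_id ψ hψm i]

/-- Equality is a pwo on a finite type. -/
theorem univ_pwo_eq {α : Type*} [Finite α] :
    (Set.univ : Set α).PartiallyWellOrderedOn (· = ·) := by
  rw [Set.partiallyWellOrderedOn_iff_exists_lt]
  intro f _
  haveI : Infinite ℕ := inferInstance
  obtain ⟨a, ha⟩ := Finite.exists_infinite_fiber f
  have hinf : (f ⁻¹' {a}).Infinite := Set.infinite_coe_iff.1 ha
  obtain ⟨m, hm⟩ := hinf.nonempty
  obtain ⟨n, hn, hmn⟩ := hinf.exists_gt m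
  exact ⟨m, n, hmn, by simp only [Set.mem_preimage, Set.mem_singleton_iff] at hm hn; rw [hm, hn]⟩

open scoped Classical

lemma ncard_range_fin {n m : ℕ} (w : Fin n → Fin m) (hw : Function.Injective w) :
    (Set.range w).ncard = n := by
  rw [← Set.image_univ, Set.ncard_image_of_injective _ hw, Set.ncard_univ,
    Nat.card_eq_fintype_card, Fintype.card_fin]

namespace OId

variable {d : ℕ}

/-- The letter of the encoding word of a morphism at a position of the target. -/
noncomputable def letter {X Y : OId d} (f : X ⟶ Y) (p : Fin Y.len) : Option Bool :=
  if p ∈ Set.range Y.lam then none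
  else if p ∈ Set.range (emb f) then some true else some false

/-- The encoding word of a morphism. -/
noncomputable def word {X Y : OId d} (f : X ⟶ Y) : List (Option Bool) :=
  List.ofFn (letter f)

theorem oid_hom_pwo (X : OId d) :
    (Set.univ : Set (Σ z : OId d, (X ⟶ z))).PartiallyWellOrderedOn
      (fun a b => ∃ h : a.1 ⟶ b.1, a.2 ≫ h = b.2) := by
  rw [Set.partiallyWellOrderedOn_iff_exists_lt]
  intro F _
  haveI : IsRefl (Option Bool) (· = ·) := ⟨fun _ => rfl⟩
  haveI : IsTrans (Option Bool) (· = ·) := ⟨fun _ _ _ h1 h2 => h1.trans h2⟩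
  have higman := (univ_pwo_eq (α := Option Bool)).partiallyWellOrderedOn_sublistForall₂
    (r := (· = ·))
  obtain ⟨t, t', htt', hsub⟩ := Set.partiallyWellOrderedOn_iff_exists_lt.1 higman (fun t => word (F t).2) (fun t => by simp)
  refine ⟨t, t', htt', ?_⟩
  rw [List.sublistForall₂_iff] at hsub
  obtain ⟨l, hfor, hsl⟩ := hsub
  rw [List.forall₂_eq_eq_eq] at hfor
  subst hfor
  obtain ⟨e, he⟩ := List.sublist_iff_exists_orderEmbedding_getElem?_eq.1 hsl
  set Y := (F t).1 with hY
  set Z := (F t').1 with hZ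
  set f := (F t).2 with hf
  set g := (F t').2 with hg
  -- basic facts about the embedding
  have hkey : ∀ p : Fin Y.len, ∃ hp : e p.val < Z.len, letter g ⟨e p.val, hp⟩ = letter f p := by
    intro p
    have h1 : (word f)[p.val]? = some (letter f p) := by
      rw [word, List.getElem?_ofFn]
      exact dif_pos p.isLt
    have h2 := (he p.val).symm.trans h1
    rw [word, List.getElem?_ofFn] at h2
    simp at h2
    exact h2
  set hemb : Fin Y.len → Fin Z.len := fun p => ⟨e p.val, (hkey p).choose⟩ with hembdef
  have hlet : ∀ p, letter g (hemb p) = letter f p := fun p => (hkey p).choose_spec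
  have hsm : StrictMono hemb := by
    intro a b hab
    exact Fin.mk_lt_mk.2 (e.strictMono hab)
  -- separators go to separators
  have hsep : ∀ j, hemb (Y.lam j) = Z.lam j := by
    have hinj1 : StrictMono (hemb ∘ ⇑Y.lam) := hsm.comp Y.lam.strictMono
    have hsub : Set.range (hemb ∘ ⇑Y.lam) ⊆ Set.range ⇑Z.lam := by
      rintro _ ⟨j, rfl⟩
      show hemb (Y.lam j) ∈ _
      have h1 : letter f (Y.lam j) = none := by
        rw [letter, if_pos (Set.mem_range_self j)]
      have h2 : letter g (hemb (Y.lam j)) = none := (hlet _).trans h1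
      by_contra hc
      rw [letter, if_neg hc] at h2
      split at h2 <;> simp at h2
    have hre : Set.range (hemb ∘ ⇑Y.lam) = Set.range ⇑Z.lam := by
      have h1 := ncard_range_fin _ hinj1.injective
      have h2 := ncard_range_fin _ Z.lam.injective
      exact Set.eq_of_subset_of_ncard_le hsub (by rw [h1, h2]) (Set.toFinite _)
    exact strictMono_range_eq _ _ hinj1 Z.lam.strictMono hre
  -- image points go to image points
  have him : ∀ i, hemb (emb f i) = emb g i := by
    have hinj1 : StrictMono (hemb ∘ ⇑(emb f)) := hsm.comp (emb f).strictMono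
    have hsub : Set.range (hemb ∘ ⇑(emb f)) ⊆ Set.range ⇑(emb g) := by
      rintro _ ⟨i, rfl⟩
      show hemb (emb f i) ∈ _
      by_cases hpl : emb f i ∈ Set.range ⇑Y.lam
      · obtain ⟨j, hj⟩ := hpl
        rw [← hj, hsep j, ← g.2 j]
        exact Set.mem_range_self _
      · have h1 : letter f (emb f i) = some true := by
          rw [letter, if_neg hpl, if_pos (Set.mem_range_self i)]
        have h2 : letter g (hemb (emb f i)) = some true := (hlet _).trans h1
        rw [letter] at h2
        split at h2
        · simp at h2
        · split at h2
          · assumption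
          · simp at h2
    have hre : Set.range (hemb ∘ ⇑(emb f)) = Set.range ⇑(emb g) := by
      have h1 := ncard_range_fin _ hinj1.injective
      have h2 := ncard_range_fin _ (emb g).injective
      exact Set.eq_of_subset_of_ncard_le hsub (by rw [h1, h2]) (Set.toFinite _)
    exact strictMono_range_eq _ _ hinj1 (emb g).strictMono hre
  exact ⟨⟨OrderEmbedding.ofStrictMono hemb hsm, hsep⟩, hom_ext _ _ him⟩

end OId

namespace OIdNoeth

open OId Finsupp

variable {d r : ℕ} (x : Fin r → OId d)

/-- The index type for the basis of a direct sum of principal projectives. -/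
def G (y : OId d) : Type := Σ i : Fin r, (x i ⟶ y)

variable {x}

/-- Auxiliary embedding of `G x y` into a sigma of function types. -/
def emap {y : OId d} (e : G x y) : Σₗ i : Fin r, Lex (Fin (x i).len → Fin y.len) :=
  toLex ⟨e.1, toLex (fun j => OId.emb e.2 j)⟩

lemma emap_injective {y : OId d} : Function.Injective (emap (x := x) (y := y)) := by
  rintro ⟨i, f⟩ ⟨i', f'⟩ hab
  have hab' := congrArg ofLex hab
  rw [Sigma.ext_iff] at hab'
  obtain ⟨h1, h2⟩ := hab'
  dsimp only [emap, ofLex_toLex] at h1 h2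
  subst h1
  simp only [heq_eq_eq] at h2
  have h2' := congrArg ofLex h2
  have hf : f = f' := OId.hom_ext _ _ (fun j => congrFun h2' j)
  rw [hf]

instance {y : OId d} : Finite (G x y) := Finite.of_injective _ (emap_injective (y := y))

noncomputable instance {y : OId d} : LinearOrder (G x y) :=
  haveI : ∀ n : ℕ, WellFoundedLT (Fin n) := fun _ => Finite.to_wellFoundedLT
  LinearOrder.lift' (emap (x := x) (y := y)) emap_injective

lemma glt_iff {y : OId d} {a b : G x y} : a < b ↔ emap a < emap b := Iff.rfl

variable (x) in
/-- Post-composition action on basis elements. -/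
def gact {y z : OId d} (h : y ⟶ z) (e : G x y) : G x z := ⟨e.1, e.2 ≫ h⟩

lemma gact_id {y : OId d} (e : G x y) : gact x (𝟙 y) e = e := rfl

lemma gact_comp {y z w : OId d} (h : y ⟶ z) (h' : z ⟶ w) (e : G x y) :
    gact x (h ≫ h') e = gact x h' (gact x h e) := rfl

lemma gact_strictMono {y z : OId d} (h : y ⟶ z) : StrictMono (gact x h) := by
  rintro ⟨i, f⟩ ⟨i', f'⟩ hab
  replace hab := glt_iff.1 hab
  refine glt_iff.2 ?_
  cases hab with
  | left a b hfst => exact Sigma.Lex.left _ _ hfst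
  | right a b hsnd =>
    refine Sigma.Lex.right _ _ ?_
    obtain ⟨j, hj, hlt⟩ := hsnd
    refine ⟨j, fun j' hj' => ?_, ?_⟩
    · show OId.emb h (OId.emb f j') = OId.emb h (OId.emb f' j')
      rw [show OId.emb f j' = OId.emb f' j' from hj j' hj']
    · exact (OId.emb h).strictMono hlt

lemma gact_injective {y z : OId d} (h : y ⟶ z) : Function.Injective (gact x h) :=
  (gact_strictMono h).injective

end OIdNoeth

namespace OIdNoeth

open OId Finsupp

variable {d r : ℕ} {x : Fin r → OId d} {k : Type u} [CommRing k]

/-- Leading monomial of a nonzero finitely supported function. -/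
noncomputable def lm {y : OId d} (v : G x y →₀ k) (hv : v ≠ 0) : G x y :=
  v.support.max' (Finsupp.support_nonempty_iff.2 hv)

lemma lm_mem {y : OId d} (v : G x y →₀ k) (hv : v ≠ 0) : lm v hv ∈ v.support :=
  Finset.max'_mem _ _

lemma lm_coeff_ne {y : OId d} (v : G x y →₀ k) (hv : v ≠ 0) : v (lm v hv) ≠ 0 :=
  Finsupp.mem_support_iff.1 (lm_mem v hv)

lemma le_lm {y : OId d} (v : G x y →₀ k) (hv : v ≠ 0) {a : G x y} (ha : a ∈ v.support) :
    a ≤ lm v hv :=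
  Finset.le_max' _ _ ha

lemma lm_eq {y : OId d} (v : G x y →₀ k) (hv : v ≠ 0) {e : G x y} (he : e ∈ v.support)
    (hle : ∀ a ∈ v.support, a ≤ e) : lm v hv = e :=
  le_antisymm (Finset.max'_le _ _ _ hle) (le_lm v hv he)

section Map

variable {y z : OId d} (h : y ⟶ z)

/-- `gact` as an embedding. -/
def gactEmb : G x y ↪ G x z := ⟨gact x h, gact_injective h⟩

lemma mapDomain_eq_embDomain (v : G x y →₀ k) :
    Finsupp.mapDomain (gact x h) v = Finsupp.embDomain (gactEmb h) v := by
  rw [Finsupp.embDomain_eq_mapDomain (gactEmb h) v]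
  rfl

lemma mapDomain_support (v : G x y →₀ k) :
    (Finsupp.mapDomain (gact x h) v).support = v.support.map (gactEmb h) := by
  rw [mapDomain_eq_embDomain, Finsupp.support_embDomain]

lemma mapDomain_ne_zero (v : G x y →₀ k) (hv : v ≠ 0) :
    Finsupp.mapDomain (gact x h) v ≠ 0 := by
  rw [← Finsupp.support_nonempty_iff, mapDomain_support]
  exact Finset.Nonempty.map (Finsupp.support_nonempty_iff.2 hv)

lemma lm_mapDomain (v : G x y →₀ k) (hv : v ≠ 0) :
    lm (Finsupp.mapDomain (gact x h) v) (mapDomain_ne_zero h v hv) = gact x h (lm v hv) := by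
  classical
  unfold lm
  simp_rw [mapDomain_support h v, Finset.map_eq_image]
  exact Finset.max'_image (gact_strictMono h).monotone _ _

lemma coeff_mapDomain (v : G x y →₀ k) (a : G x y) :
    Finsupp.mapDomain (gact x h) v (gact x h a) = v a := by
  rw [mapDomain_eq_embDomain]
  exact Finsupp.embDomain_apply_self _ _ _

end Map

end OIdNoeth

namespace OIdNoeth

open OId Finsupp

variable {d r : ℕ} {x : Fin r → OId d} {k : Type u} [CommRing k]

/-- The ideal of leading coefficients at a given monomial. -/
def Idl {y : OId d} (S : Submodule k (G x y →₀ k)) (e : G x y) : Ideal k where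
  carrier := {c | c = 0 ∨ ∃ v, ∃ hv : v ≠ 0, v ∈ S ∧ lm v hv = e ∧ v e = c}
  zero_mem' := Or.inl rfl
  add_mem' := by
    rintro a b (rfl | ⟨v, hv, hvS, hlmv, rfl⟩) (rfl | ⟨w, hw, hwS, hlmw, rfl⟩)
    · exact Or.inl (by simp)
    · exact Or.inr ⟨w, hw, hwS, hlmw, by simp⟩
    · exact Or.inr ⟨v, hv, hvS, hlmv, by simp⟩
    · by_cases hvw : v e + w e = 0
      · exact Or.inl hvw
      · refine Or.inr ⟨v + w, ?_, S.add_mem hvS hwS, ?_, by simp⟩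
        · intro h0
          apply hvw
          rw [← Finsupp.add_apply, h0]; rfl
        · apply lm_eq
          · rw [Finsupp.mem_support_iff, Finsupp.add_apply]; exact hvw
          · intro a ha
            rcases Finset.mem_union.1 (Finsupp.support_add ha) with ha' | ha'
            · exact hlmv ▸ le_lm v hv ha'
            · exact hlmw ▸ le_lm w hw ha'
  smul_mem' := by
    rintro c a (rfl | ⟨v, hv, hvS, hlmv, rfl⟩)
    · exact Or.inl (by simp)
    · by_cases hcv : c * v e = 0
      · exact Or.inl (by simpa using hcv)
      · refine Or.inr ⟨c • v, ?_, S.smul_mem c hvS, ?_, by simp⟩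
        · intro h0
          apply hcv
          have := congrFun (congrArg DFunLike.coe h0) e
          simpa using this
        · apply lm_eq
          · rw [Finsupp.mem_support_iff, Finsupp.smul_apply]; simpa using hcv
          · intro a ha
            have ha' : a ∈ v.support := Finsupp.support_smul ha
            exact hlmv ▸ le_lm v hv ha'

lemma Idl_mono {y : OId d} {S T : Submodule k (G x y →₀ k)} (hST : S ≤ T) (e : G x y) :
    Idl S e ≤ Idl T e := by
  rintro c (rfl | ⟨v, hv, hvS, hlmv, rfl⟩)
  · exact (Idl T e).zero_mem
  · exact Or.inr ⟨v, hv, hST hvS, hlmv, rfl⟩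

lemma Idl_push {y z : OId d} (h : y ⟶ z) {S : Submodule k (G x y →₀ k)}
    {T : Submodule k (G x z →₀ k)}
    (hST : ∀ v ∈ S, Finsupp.mapDomain (gact x h) v ∈ T) (e : G x y) :
    Idl S e ≤ Idl T (gact x h e) := by
  rintro c (rfl | ⟨v, hv, hvS, hlmv, rfl⟩)
  · exact (Idl T _).zero_mem
  · refine Or.inr ⟨Finsupp.mapDomain (gact x h) v, mapDomain_ne_zero h v hv, hST v hvS, ?_, ?_⟩
    · rw [lm_mapDomain h v hv, hlmv]
    · rw [← hlmv, coeff_mapDomain h v (lm v hv), hlmv]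

/-- Gröbner descent: if the leading-coefficient ideals agree, the submodules agree. -/
lemma descend {y : OId d} (A B : Submodule k (G x y →₀ k)) (hAB : A ≤ B)
    (hI : ∀ e, Idl B e ≤ Idl A e) : B ≤ A := by
  haveI : WellFoundedLT (G x y) := Finite.to_wellFoundedLT
  have key : ∀ e : G x y, ∀ v : G x y →₀ k, ∀ hv : v ≠ 0, v ∈ B → lm v hv = e → v ∈ A := by
    intro e
    induction e using WellFoundedLT.induction with
    | ind e IH =>
      intro v hv hvB hlmv
      have hc : v e ∈ Idl B e := Or.inr ⟨v, hv, hvB, hlmv, rfl⟩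
      rcases hI e hc with hc0 | ⟨w, hw, hwA, hlmw, hwe⟩
      · exact absurd (hlmv ▸ hc0) (lm_coeff_ne v hv)
      · by_cases hvw : v = w
        · rwa [hvw]
        · have hu : v - w ≠ 0 := sub_ne_zero.2 hvw
          have huB : v - w ∈ B := B.sub_mem hvB (hAB hwA)
          have hlt : lm (v - w) hu < e := by
            have hne : e ∉ (v - w).support := by
              rw [Finsupp.mem_support_iff, Finsupp.sub_apply, hwe]
              simp
            have hmem := lm_mem (v - w) hu
            have hle : lm (v - w) hu ≤ e := by
              rcases Finset.mem_union.1 (Finsupp.support_sub hmem) with ha | ha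
              · exact hlmv ▸ le_lm v hv ha
              · exact hlmw ▸ le_lm w hw ha
            exact lt_of_le_of_ne hle (fun hh => hne (hh ▸ hmem))
          have := IH _ hlt (v - w) hu huB rfl
          have : (v - w) + w ∈ A := A.add_mem this hwA
          rwa [sub_add_cancel] at this
  intro v hvB
  by_cases hv : v = 0
  · rw [hv]; exact A.zero_mem
  · exact key _ v hv hvB rfl

end OIdNoeth

namespace OIdNoeth

open OId Finsupp

variable {d r : ℕ} {x : Fin r → OId d}

/-- The divisibility quasi-order on all basis elements is a pwo. -/
theorem sigma_pwo :
    (Set.univ : Set (Σ z : OId d, G x z)).PartiallyWellOrderedOn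
      (fun a b => ∃ h : a.1 ⟶ b.1, gact x h a.2 = b.2) := by
  rw [Set.partiallyWellOrderedOn_iff_exists_lt]
  intro F _
  obtain ⟨i0, hinf'⟩ := Finite.exists_infinite_fiber (fun t => (F t).2.1)
  have hinf : {t | (F t).2.1 = i0}.Infinite := Set.infinite_coe_iff.1 hinf'
  set g : ℕ → ℕ := Nat.nth (fun t => (F t).2.1 = i0) with hgdef
  have hgm : StrictMono g := Nat.nth_strictMono hinf
  have hgp : ∀ t, (F (g t)).2.1 = i0 := fun t => Nat.nth_mem_of_infinite hinf t
  set Fs : ℕ → Σ z : OId d, (x i0 ⟶ z) := fun t => ⟨(F (g t)).1,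
    cast (congrArg (fun i => ((x i ⟶ (F (g t)).1) : Type)) (hgp t)) ((F (g t)).2.2)⟩ with hFs
  have key : ∀ t, (F (g t)).2 = Sigma.mk i0 ((Fs t).2) := fun t =>
    Sigma.ext (hgp t) (HEq.symm (cast_heq _ _))
  obtain ⟨t₁, t₂, ht, hh⟩ := Set.partiallyWellOrderedOn_iff_exists_lt.1 (OId.oid_hom_pwo (x i0)) Fs (fun _ => Set.mem_univ _)
  obtain ⟨h, hcomp⟩ := hh
  refine ⟨g t₁, g t₂, hgm ht, ⟨h, ?_⟩⟩
  rw [key t₁, key t₂]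
  exact congrArg (Sigma.mk i0) hcomp

variable (x) (k : Type u) [CommRing k]

/-- The subfunctor generated by a finite list of elements. -/
noncomputable def genSub (L : List (Σ y : OId d, (G x y →₀ k))) (z : OId d) : Submodule k (G x z →₀ k) :=
  Submodule.span k {u | ∃ p ∈ L, ∃ h : p.1 ⟶ z, Finsupp.mapDomain (gact x h) p.2 = u}

variable {x k}

lemma genSub_mono {L L' : List (Σ y : OId d, (G x y →₀ k))} (hL : ∀ p ∈ L, p ∈ L')
    (z : OId d) : genSub x k L z ≤ genSub x k L' z :=
  Submodule.span_mono (fun u ⟨p, hp, h, hu⟩ => ⟨p, hL p hp, h, hu⟩)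

lemma genSub_closed (L : List (Σ y : OId d, (G x y →₀ k))) {y z : OId d} (h : y ⟶ z)
    (v : G x y →₀ k) (hv : v ∈ genSub x k L y) :
    Finsupp.mapDomain (gact x h) v ∈ genSub x k L z := by
  have hle : genSub x k L y ≤
      Submodule.comap (Finsupp.lmapDomain k k (gact x h)) (genSub x k L z) := by
    rw [genSub, Submodule.span_le]
    rintro u ⟨p, hp, h', rfl⟩
    refine Submodule.mem_comap.2 ?_
    rw [Finsupp.lmapDomain_apply, ← Finsupp.mapDomain_comp]
    have heq : Finsupp.mapDomain (gact x h ∘ gact x h') p.2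
        = Finsupp.mapDomain (gact x (h' ≫ h)) p.2 := by
      congr 1
    rw [heq]
    exact Submodule.subset_span ⟨p, hp, h' ≫ h, rfl⟩
  exact hle hv

lemma mem_genSub_self (L : List (Σ y : OId d, (G x y →₀ k))) {p : Σ y : OId d, (G x y →₀ k)}
    (hp : p ∈ L) : p.2 ∈ genSub x k L p.1 := by
  apply Submodule.subset_span
  refine ⟨p, hp, 𝟙 p.1, ?_⟩
  have h1 : gact x (𝟙 p.1) = id := funext fun e => gact_id e
  rw [h1, Finsupp.mapDomain_id]

/-- The main Noetherianity theorem: every subfunctor of a finite direct sum of principal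
projectives is finitely generated. -/
theorem exists_fin_gen [IsNoetherianRing k] (S : ∀ z : OId d, Submodule k (G x z →₀ k))
    (hS : ∀ {y z : OId d} (h : y ⟶ z) (v : G x y →₀ k), v ∈ S y →
      Finsupp.mapDomain (gact x h) v ∈ S z) :
    ∃ L : List (Σ y : OId d, (G x y →₀ k)),
      (∀ p ∈ L, p.2 ∈ S p.1) ∧ ∀ z, S z ≤ genSub x k L z := by
  by_contra hcon
  push_neg at hcon
  classical
  have step : ∀ L : {L : List (Σ y : OId d, (G x y →₀ k)) // ∀ p ∈ L, p.2 ∈ S p.1},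
      ∃ q : Σ z : OId d, (G x z →₀ k), q.2 ∈ S q.1 ∧ q.2 ∉ genSub x k L.1 q.1 := by
    intro L
    obtain ⟨z, hz⟩ := hcon L.1 L.2
    obtain ⟨v, hv1, hv2⟩ := SetLike.not_le_iff_exists.1 hz
    exact ⟨⟨z, v⟩, hv1, hv2⟩
  let pickq := fun L => Classical.choose (step L)
  have pickq_spec := fun L => Classical.choose_spec (step L)
  let T : ℕ → {L : List (Σ y : OId d, (G x y →₀ k)) // ∀ p ∈ L, p.2 ∈ S p.1} :=
    fun n => Nat.rec ⟨[], fun p hp => absurd hp List.not_mem_nil⟩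
      (fun _ Ln => ⟨Ln.1 ++ [pickq Ln], by
        intro p hp
        rcases List.mem_append.1 hp with hp' | hp'
        · exact Ln.2 p hp'
        · rw [List.mem_singleton.1 hp']
          exact (pickq_spec Ln).1⟩) n
  set q : ℕ → Σ z : OId d, (G x z →₀ k) := fun n => pickq (T n) with hq
  set L : ℕ → List (Σ y : OId d, (G x y →₀ k)) := fun n => (T n).1 with hLdef
  have hLsucc : ∀ n, L (n + 1) = L n ++ [q n] := fun n => rfl
  have hqS : ∀ n, (q n).2 ∈ S (q n).1 := fun n => (pickq_spec (T n)).1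
  have hqnot : ∀ n, (q n).2 ∉ genSub x k (L n) (q n).1 := fun n => (pickq_spec (T n)).2
  have hqmem : ∀ n, (q n).2 ∈ genSub x k (L (n + 1)) (q n).1 := fun n =>
    mem_genSub_self _ (by rw [hLsucc n]; simp)
  have hsub : ∀ m n, m ≤ n → ∀ p ∈ L m, p ∈ L n := by
    intro m n hmn
    induction n, hmn using Nat.le_induction with
    | base => exact fun p hp => hp
    | succ n hmn ih =>
      intro p hp
      rw [hLsucc n, List.mem_append]
      exact Or.inl (ih p hp)
  have hstep : ∀ n, ∃ e : G x (q n).1, ∃ c : k,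
      c ∈ Idl (genSub x k (L (n + 1)) (q n).1) e ∧
      c ∉ Idl (genSub x k (L n) (q n).1) e := by
    intro n
    by_contra hno
    push_neg at hno
    have hdes := descend (genSub x k (L n) (q n).1) (genSub x k (L (n + 1)) (q n).1)
      (genSub_mono (fun p hp => hsub n (n + 1) (Nat.le_succ n) p hp) _)
      (fun e c hc => hno e c hc)
    exact hqnot n (hdes (hqmem n))
  choose eI cI hc1 hc2 using hstep
  haveI : IsRefl ((z : OId d) × G x z) (fun a b => ∃ h : a.1 ⟶ b.1, gact x h a.2 = b.2) :=
    ⟨fun a => ⟨𝟙 a.1, gact_id a.2⟩⟩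
  haveI : IsTrans ((z : OId d) × G x z) (fun a b => ∃ h : a.1 ⟶ b.1, gact x h a.2 = b.2) :=
    ⟨fun a b c ⟨h1, hh1⟩ ⟨h2, hh2⟩ => ⟨h1 ≫ h2, by rw [gact_comp, hh1, hh2]⟩⟩
  haveI : IsPreorder ((z : OId d) × G x z) (fun a b => ∃ h : a.1 ⟶ b.1, gact x h a.2 = b.2) :=
    { refl := fun a => ⟨𝟙 a.1, gact_id a.2⟩
      trans := fun a b c ⟨h1, hh1⟩ ⟨h2, hh2⟩ => ⟨h1 ≫ h2, by rw [gact_comp, hh1, hh2]⟩ }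
  obtain ⟨g, hg⟩ := sigma_pwo.exists_monotone_subseq
    (f := fun n => (⟨(q n).1, eI n⟩ : Σ z : OId d, G x z)) (fun _ => Set.mem_univ _)
  have hJmono : Monotone (fun s => Ideal.span {a : k | ∃ t < s, a = cI (g t)}) := by
    intro s s' hss'
    exact Ideal.span_mono (fun a ⟨t, hts, ha⟩ => ⟨t, lt_of_lt_of_le hts hss', ha⟩)
  set J : ℕ →o Ideal k := ⟨fun s => Ideal.span {a : k | ∃ t < s, a = cI (g t)}, hJmono⟩
    with hJdef
  have hJle : ∀ s, J s ≤ Idl (genSub x k (L (g s)) (q (g s)).1) (eI (g s)) := by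
    intro s
    apply Ideal.span_le.2
    rintro a ⟨t, hts, rfl⟩
    have hgt : g t + 1 ≤ g s := g.strictMono hts
    have h1 : cI (g t) ∈ Idl (genSub x k (L (g t + 1)) (q (g t)).1) (eI (g t)) := hc1 _
    have h2 : Idl (genSub x k (L (g t + 1)) (q (g t)).1) (eI (g t)) ≤
        Idl (genSub x k (L (g s)) (q (g t)).1) (eI (g t)) :=
      Idl_mono (genSub_mono (hsub _ _ hgt) _) _
    obtain ⟨h, hh⟩ := hg t s (le_of_lt hts)
    have h3 := Idl_push h (fun v hv => genSub_closed (L (g s)) h v hv) (eI (g t))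
    rw [hh] at h3
    exact h3 (h2 h1)
  obtain ⟨n, hn⟩ := monotone_stabilizes_iff_noetherian.2
    (inferInstance : IsNoetherian k k) J
  have hmem : cI (g n) ∈ J (n + 1) :=
    Ideal.subset_span ⟨n, Nat.lt_succ_self n, rfl⟩
  rw [← hn (n + 1) (Nat.le_succ n)] at hmem
  exact hc2 (g n) (hJle n hmem)

end OIdNoeth

/-- For every `d ≥ 0` and every noetherian commutative ring `k`, the category of
`OI(d)`-modules over `k` is locally noetherian: every submodule of a finitely generated
`OI(d)`-module is finitely generated. -/
theorem oid_modules_locally_noetherian (d : ℕ) (k : Type u) [CommRing k]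
    [IsNoetherianRing k] (M N : OId d ⥤ ModuleCat.{u} k) (ι : N ⟶ M)
    [Mono ι] (hM : CatModule.FG M) : CatModule.FG N := by
  classical
  obtain ⟨r, x, m, hspan⟩ := hM
  have hι : ∀ y : OId d, Function.Injective (ι.app y) := fun y =>
    (ModuleCat.mono_iff_injective (ι.app y)).1 inferInstance
  -- the canonical surjection from the free module onto `M`
  let φ : ∀ y : OId d, (OIdNoeth.G x y →₀ k) →ₗ[k] M.obj y :=
    fun y => Finsupp.linearCombination k (fun e : OIdNoeth.G x y => M.map e.2 (m e.1))
  have hφ_surj : ∀ y, Function.Surjective (φ y) := by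
    intro y
    rw [← LinearMap.range_eq_top, Finsupp.range_linearCombination]
    rw [← hspan y]
    congr 1
    ext v
    constructor
    · rintro ⟨⟨i, f⟩, rfl⟩
      exact ⟨i, f, rfl⟩
    · rintro ⟨i, f, rfl⟩
      exact ⟨⟨i, f⟩, rfl⟩
  have hφ_nat : ∀ {y z : OId d} (h : y ⟶ z) (v : OIdNoeth.G x y →₀ k),
      φ z (Finsupp.mapDomain (OIdNoeth.gact x h) v) = M.map h (φ y v) := by
    intro y z h v
    rw [Finsupp.linearCombination_mapDomain]
    rw [Finsupp.apply_linearCombination]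
    have hfun : ((fun e : OIdNoeth.G x z => (M.map e.2) (m e.1)) ∘ OIdNoeth.gact x h)
        = (⇑(M.map h) ∘ fun e : OIdNoeth.G x y => (M.map e.2) (m e.1)) := by
      funext e
      show M.map (e.2 ≫ h) (m e.1) = M.map h (M.map e.2 (m e.1))
      rw [M.map_comp]
      rfl
    rw [hfun]
  let S : ∀ z : OId d, Submodule k (OIdNoeth.G x z →₀ k) :=
    fun z => Submodule.comap (φ z) (LinearMap.range (ι.app z).hom)
  have hSclosed : ∀ {y z : OId d} (h : y ⟶ z) (v : OIdNoeth.G x y →₀ k), v ∈ S y →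
      Finsupp.mapDomain (OIdNoeth.gact x h) v ∈ S z := by
    intro y z h v hv
    obtain ⟨n, hn⟩ := LinearMap.mem_range.1 (Submodule.mem_comap.1 hv)
    refine Submodule.mem_comap.2 (LinearMap.mem_range.2 ⟨N.map h n, ?_⟩)
    have hnat := congrFun (congrArg (fun (f : N.obj y ⟶ M.obj z) => (f : N.obj y → M.obj z))
      (ι.naturality h)) n
    simp only [CategoryTheory.comp_apply, Function.comp_apply] at hnat
    rw [hφ_nat h v, ← hn]
    exact hnat
  obtain ⟨L, hL1, hL2⟩ := OIdNoeth.exists_fin_gen S (fun h v hv => hSclosed h v hv)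
  -- choose preimages of the generators in `N`
  have hLget : ∀ j : Fin L.length, (L.get j).2 ∈ S (L.get j).1 :=
    fun j => hL1 _ (L.get_mem j)
  let np : ∀ j : Fin L.length, N.obj (L.get j).1 :=
    fun j => (LinearMap.mem_range.1 (Submodule.mem_comap.1 (hLget j))).choose
  have hnp : ∀ j, ι.app (L.get j).1 (np j) = φ (L.get j).1 (L.get j).2 :=
    fun j => (LinearMap.mem_range.1 (Submodule.mem_comap.1 (hLget j))).choose_spec
  refine ⟨L.length, fun j => (L.get j).1, np, ?_⟩
  intro z
  rw [eq_top_iff]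
  rintro n -
  set T : Set (N.obj z) := {v | ∃ j, ∃ f : (L.get j).1 ⟶ z, N.map f (np j) = v} with hT
  obtain ⟨v, hv⟩ := hφ_surj z (ι.app z n)
  have hvS : v ∈ S z := Submodule.mem_comap.2 (LinearMap.mem_range.2 ⟨n, hv.symm⟩)
  have hvgen : v ∈ OIdNoeth.genSub x k L z := hL2 z hvS
  have himg : φ z v ∈ Submodule.map (φ z) (OIdNoeth.genSub x k L z) :=
    Submodule.mem_map_of_mem hvgen
  rw [OIdNoeth.genSub, Submodule.map_span] at himg
  have hsub : (φ z) '' {u | ∃ p ∈ L, ∃ h : p.1 ⟶ z, Finsupp.mapDomain (OIdNoeth.gact x h) p.2 = u}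
      ⊆ (ι.app z) '' T := by
    rintro _ ⟨u, ⟨p, hp, h, rfl⟩, rfl⟩
    obtain ⟨j, hj⟩ := List.mem_iff_get.1 hp
    subst hj
    refine ⟨N.map h (np j), ⟨j, h, rfl⟩, ?_⟩
    have hnat := congrFun (congrArg
      (fun (f : N.obj (L.get j).1 ⟶ M.obj z) => (f : N.obj (L.get j).1 → M.obj z))
      (ι.naturality h)) (np j)
    simp only [CategoryTheory.comp_apply, Function.comp_apply] at hnat
    rw [hnat, hnp j, hφ_nat h]
  have : φ z v ∈ Submodule.span k ((ι.app z) '' T) :=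
    Submodule.span_mono hsub himg
  rw [← Submodule.map_span] at this
  rw [hv] at this
  obtain ⟨n', hn', hn'eq⟩ := Submodule.mem_map.1 this
  rwa [← hι z hn'eq]
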